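/- Let q ≥ 2 be an integer and let G and H be finite simple graphs such that G contains at least one induced copy of H. If G' is the random induced subgraph of G obtained by keeping each vertex independently with probability 1/2, then the probability that the number of induced copies of H in G' is not a multiple of q is at least 2^(−|V(H)|). -/

import Mathlib

open Finset in
lemma alt_sum_powerset_inv {α : Type*} [DecidableEq α] (T : Finset α) (g : Finset α → ℤ) :
    ∑ B ∈ T.powerset, (-1 : ℤ) ^ B.card * ∑ C ∈ B.powerset, g C
      = (-1 : ℤ) ^ T.card * g T := by
  classical
  have swap : ∑ B ∈ T.powerset, ∑ C ∈ B.powerset, (-1 : ℤ) ^ B.card * g C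
      = ∑ C ∈ T.powerset, ∑ B ∈ T.powerset.filter (fun B => C ⊆ B), (-1 : ℤ) ^ B.card * g C := by
    apply Finset.sum_comm'
    intro B C
    simp only [mem_powerset, mem_filter]
    constructor
    · rintro ⟨hB, hC⟩; exact ⟨⟨hB, hC⟩, hC.trans hB⟩
    · rintro ⟨⟨hB, hC⟩, _⟩; exact ⟨hB, hC⟩
  calc ∑ B ∈ T.powerset, (-1 : ℤ) ^ B.card * ∑ C ∈ B.powerset, g C
      = ∑ B ∈ T.powerset, ∑ C ∈ B.powerset, (-1 : ℤ) ^ B.card * g C := by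
        simp [Finset.mul_sum]
    _ = ∑ C ∈ T.powerset, ∑ B ∈ T.powerset.filter (fun B => C ⊆ B), (-1 : ℤ) ^ B.card * g C :=
        swap
    _ = ∑ C ∈ T.powerset, (∑ B ∈ T.powerset.filter (fun B => C ⊆ B), (-1 : ℤ) ^ B.card) * g C := by
        simp [Finset.sum_mul]
    _ = (-1 : ℤ) ^ T.card * g T := by
        have inner : ∀ C ∈ T.powerset,
            (∑ B ∈ T.powerset.filter (fun B => C ⊆ B), (-1 : ℤ) ^ B.card)
              = if C = T then (-1 : ℤ) ^ T.card else 0 := by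
          intro C hC
          rw [mem_powerset] at hC
          have hbij : ∑ B ∈ T.powerset.filter (fun B => C ⊆ B), (-1 : ℤ) ^ B.card
              = ∑ D ∈ (T \ C).powerset, (-1 : ℤ) ^ (C ∪ D).card := by
            apply Finset.sum_nbij' (fun B => B \ C) (fun D => C ∪ D)
            · intro B hB
              simp only [mem_filter, mem_powerset] at hB ⊢
              exact sdiff_subset_sdiff hB.1 (le_refl C)
            · intro D hD
              simp only [mem_powerset] at hD
              simp only [mem_filter, mem_powerset]
              exact ⟨union_subset hC (hD.trans (sdiff_subset)), subset_union_left⟩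
            · intro B hB
              simp only [mem_filter, mem_powerset] at hB
              exact union_sdiff_of_subset hB.2
            · intro D hD
              simp only [mem_powerset] at hD
              have hdisj : Disjoint C D := (sdiff_disjoint.mono_left hD).symm
              exact union_sdiff_cancel_left hdisj
            · intro B hB
              simp only [mem_filter, mem_powerset] at hB
              rw [union_sdiff_of_subset hB.2]
          rw [hbij]
          have hco : ∀ D ∈ (T \ C).powerset, (-1 : ℤ) ^ (C ∪ D).card
              = (-1 : ℤ) ^ C.card * (-1 : ℤ) ^ D.card := by
            intro D hD
            rw [mem_powerset] at hD
            have hdisj : Disjoint C D := (sdiff_disjoint.mono_left hD).symm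
            rw [card_union_of_disjoint hdisj, pow_add]
          rw [Finset.sum_congr rfl hco, ← Finset.mul_sum, sum_powerset_neg_one_pow_card]
          by_cases h : C = T
          · subst h; simp
          · have hne : T \ C ≠ ∅ := by
              intro he
              exact h (Finset.Subset.antisymm hC (by rwa [← sdiff_eq_empty_iff_subset]))
            simp [hne, h]
        rw [Finset.sum_congr rfl (fun C hC => by rw [inner C hC] :
          ∀ C ∈ T.powerset, (∑ B ∈ T.powerset.filter (fun B => C ⊆ B), (-1 : ℤ) ^ B.card) * g C
            = (if C = T then (-1 : ℤ) ^ T.card else 0) * g C)]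
        simp only [ite_mul, zero_mul]
        rw [Finset.sum_ite_eq' T.powerset T (fun C => (-1 : ℤ) ^ T.card * g C)]
        simp

open Classical in
/-- The number of induced copies of `H` among the vertices in `S`:
subsets of `S` whose induced subgraph is isomorphic to `H`. -/
noncomputable def inducedCopies {V W : Type*} [Fintype V] [DecidableEq V]
    (G : SimpleGraph V) (H : SimpleGraph W) (S : Finset V) : ℕ :=
  (S.powerset.filter fun s => Nonempty ((G.induce (s : Set V)) ≃g H)).card

open Classical in
lemma inducedCopies_eq {V W : Type*} [Fintype V] [DecidableEq V]
    (G : SimpleGraph V) (H : SimpleGraph W) (S : Finset V) :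
    inducedCopies G H S
      = (S.powerset.filter fun s : Finset V =>
          Nonempty ((G.induce ((s : Set V))) ≃g H)).card := by
  unfold inducedCopies
  rw [show ((do let a ← S.powerset; pure ((↑a : Set V))) : Finset (Set V))
      = S.powerset.image (fun a : Finset V => (↑a : Set V)) from Finset.sup_singleton_apply _ _]
  rw [Finset.filter_image]
  exact Finset.card_image_of_injOn (Finset.coe_injective.injOn)

theorem sampling_lemma {V W : Type*} [Fintype V] [DecidableEq V] [Fintype W]
    (q : ℕ) (hq : 2 ≤ q) (G : SimpleGraph V) (H : SimpleGraph W)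
    (hcopy : inducedCopies G H Finset.univ ≠ 0) :
    ((1 : ℝ) / 2) ^ Fintype.card W ≤
      (((Finset.univ : Finset (Finset V)).filter
          fun S => ¬ (q ∣ inducedCopies G H S)).card : ℝ) / 2 ^ Fintype.card V := by
  classical
  rw [inducedCopies_eq] at hcopy
  obtain ⟨T, hT⟩ := Finset.card_ne_zero.mp hcopy
  simp only [Finset.mem_filter, Finset.mem_powerset] at hT
  have hTcopy : Nonempty ((G.induce (T : Set V)) ≃g H) := hT.2
  -- any copy has `Fintype.card W` vertices
  have card_of_copy : ∀ s : Finset V, Nonempty ((G.induce (s : Set V)) ≃g H) →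
      s.card = Fintype.card W := by
    intro s ⟨e⟩
    have h1 : Fintype.card ((s : Set V) : Type _) = Fintype.card W := Fintype.card_congr e.toEquiv
    simpa using h1
  have hTcard : T.card = Fintype.card W := card_of_copy T hTcopy
  set n := Fintype.card V with hn
  set w := Fintype.card W with hw
  have hwn : w ≤ n := by
    rw [← hTcard]
    exact Finset.card_le_univ T
  -- the refined count
  set g : Finset V → Finset V → ℕ := fun A C =>
    (((A ∪ T).powerset.filter fun s : Finset V =>
      Nonempty ((G.induce ((s : Set V))) ≃g H) ∧ s ∩ T = C)).card with hg
  -- splitting lemma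
  have split : ∀ A : Finset V, A ∩ T = ∅ → ∀ B ⊆ T,
      inducedCopies G H (A ∪ B) = ∑ C ∈ B.powerset, g A C := by
    intro A hA B hB
    rw [inducedCopies_eq]
    rw [Finset.card_eq_sum_card_fiberwise (f := fun s => s ∩ T) (t := B.powerset)
      (fun s hs => by
        simp only [Finset.mem_coe, Finset.mem_filter, Finset.mem_powerset] at hs ⊢
        intro x hx
        rcases Finset.mem_inter.mp hx with ⟨hxs, hxT⟩
        rcases Finset.mem_union.mp (hs.1 hxs) with h | h
        · exact absurd (Finset.mem_inter.mpr ⟨h, hxT⟩) (by simp [hA])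
        · exact h)]
    refine Finset.sum_congr rfl fun C hC => ?_
    rw [Finset.mem_powerset] at hC
    congr 1
    rw [Finset.filter_filter]
    ext s
    simp only [Finset.mem_filter, Finset.mem_powerset]
    constructor
    · rintro ⟨hs, hcpy, hsT⟩
      refine ⟨hs.trans (Finset.union_subset_union (le_refl A) hB), hcpy, hsT⟩
    · rintro ⟨hs, hcpy, hsT⟩
      refine ⟨?_, hcpy, hsT⟩
      intro x hx
      rcases Finset.mem_union.mp (hs hx) with h | h
      · exact Finset.mem_union_left _ h
      · exact Finset.mem_union_right _ (hC (hsT ▸ Finset.mem_inter.mpr ⟨hx, h⟩))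
  -- the top fiber has exactly one element, namely T itself
  have gtop : ∀ A : Finset V, g A T = 1 := by
    intro A
    have heq : ((A ∪ T).powerset.filter fun s : Finset V =>
        Nonempty ((G.induce ((s : Set V))) ≃g H) ∧ s ∩ T = T) = ({T} : Finset (Finset V)) := by
      ext s
      simp only [Finset.mem_filter, Finset.mem_powerset, Finset.mem_singleton]
      constructor
      · rintro ⟨hs, hcpy, hsT⟩
        have hTs : T ⊆ s := Finset.inter_eq_right.mp hsT
        have hcard : s.card ≤ T.card := by
          rw [card_of_copy s hcpy, hTcard]
        exact (Finset.eq_of_subset_of_card_le hTs hcard).symm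
      · rintro rfl
        exact ⟨Finset.subset_union_right, hTcopy, Finset.inter_self _⟩
    exact (congrArg Finset.card heq).trans (Finset.card_singleton T)
  -- key existence claim
  have key : ∀ A : Finset V, A ∩ T = ∅ →
      ∃ B, B ⊆ T ∧ ¬ q ∣ inducedCopies G H (A ∪ B) := by
    intro A hA
    by_contra hcon
    push_neg at hcon
    have hdvd : (q : ℤ) ∣ ∑ B ∈ T.powerset, (-1 : ℤ) ^ B.card *
        (inducedCopies G H (A ∪ B) : ℤ) := by
      refine Finset.dvd_sum fun B hB => Dvd.dvd.mul_left ?_ _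
      exact_mod_cast Int.natCast_dvd_natCast.mpr (hcon B (Finset.mem_powerset.mp hB))
    have hsum : ∑ B ∈ T.powerset, (-1 : ℤ) ^ B.card * (inducedCopies G H (A ∪ B) : ℤ)
        = (-1 : ℤ) ^ T.card * (g A T : ℤ) := by
      rw [← alt_sum_powerset_inv T (fun C => (g A C : ℤ))]
      refine Finset.sum_congr rfl fun B hB => ?_
      rw [split A hA B (Finset.mem_powerset.mp hB)]
      push_cast
      ring
    rw [hsum, gtop A] at hdvd
    have : (q : ℤ).natAbs ∣ ((-1 : ℤ) ^ T.card * (1 : ℤ)).natAbs :=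
      Int.natAbs_dvd_natAbs.mpr hdvd
    simp only [mul_one, Int.natAbs_pow, Int.natAbs_neg, Int.natAbs_one, one_pow,
      Int.natAbs_natCast] at this
    have := Nat.le_of_dvd one_pos this
    omega
  -- choice of B for each A
  choose! B hBsub hBnd using key
  set φ : Finset V → Finset V := fun A => A ∪ B A with hφ
  set X := (Finset.univ \ T).powerset with hX
  have hAdisj : ∀ A ∈ X, A ∩ T = ∅ := by
    intro A hA
    rw [hX, Finset.mem_powerset] at hA
    apply Finset.eq_empty_of_forall_notMem
    intro x hx
    rcases Finset.mem_inter.mp hx with ⟨hxA, hxT⟩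
    exact (Finset.mem_sdiff.mp (hA hxA)).2 hxT
  have hmaps : ∀ A ∈ X, φ A ∈ (Finset.univ : Finset (Finset V)).filter
      fun S => ¬ (q ∣ inducedCopies G H S) := by
    intro A hA
    simp only [Finset.mem_filter, Finset.mem_univ, true_and]
    exact hBnd A (hAdisj A hA)
  have hrec : ∀ A ∈ X, (φ A) \ T = A := by
    intro A hA
    rw [hφ]
    rw [Finset.union_sdiff_distrib,
      Finset.sdiff_eq_empty_iff_subset.mpr (hBsub A (hAdisj A hA))]
    rw [Finset.union_empty]
    rw [hX, Finset.mem_powerset] at hA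
    apply Finset.sdiff_eq_self_of_disjoint
    exact Finset.disjoint_left.mpr fun x hx hxT => (Finset.mem_sdiff.mp (hA hx)).2 hxT
  have hinj : Set.InjOn φ X := by
    intro A hA A' hA' h
    rw [← hrec A hA, ← hrec A' hA', h]
  have hcard : X.card ≤ ((Finset.univ : Finset (Finset V)).filter
      fun S => ¬ (q ∣ inducedCopies G H S)).card :=
    Finset.card_le_card_of_injOn φ hmaps hinj
  have hXcard : X.card = 2 ^ (n - w) := by
    rw [hX, Finset.card_powerset, Finset.card_sdiff_of_subset (Finset.subset_univ T),
      Finset.card_univ, hTcard]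
  rw [hXcard] at hcard
  -- final real arithmetic
  have h2n : (0 : ℝ) < 2 ^ n := by positivity
  rw [div_pow, one_pow, div_le_div_iff₀ (by positivity) h2n]
  have hNge : (2 : ℝ) ^ (n - w) ≤ (((Finset.univ : Finset (Finset V)).filter
      fun S => ¬ (q ∣ inducedCopies G H S)).card : ℝ) := by
    exact_mod_cast hcard
  have hpow : (2 : ℝ) ^ (n - w) * 2 ^ w = 2 ^ n := by
    rw [← pow_add, Nat.sub_add_cancel hwn]
  calc (1 : ℝ) * 2 ^ n = 2 ^ (n - w) * 2 ^ w := by rw [one_mul, hpow]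
    _ ≤ _ := by
        apply mul_le_mul_of_nonneg_right hNge (by positivity)
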